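/- Let p ≥ 2 be an integer. In the graded algebra Y_p, the homogeneous component of degree 0 has ℂ-dimension 2p, and for every n ≥ 1 the homogeneous component of degree n has ℂ-dimension 2(n+1)(p−1); equivalently, for every n ≥ 0 the sum of the dimensions of the homogeneous components of degrees 0 through n equals n(n+1)(p−1) + 2n(p−1) + 2p. -/

import Mathlib

open FreeAlgebra

/-- Generators of the algebra `Y_p`: idempotents `e_s^±` of degree `0` (the sign `+` is
encoded by `true` and `-` by `false`) and arrows `α_{s,i}`, `β_{s,i}` of degree `1` (the
indices `1, 2` are encoded by `0, 1 : Fin 2`). -/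
inductive YGen (p : ℕ) : Type
  | e : Fin p → Bool → YGen p
  | α : Fin (p - 1) → Fin 2 → YGen p
  | β : Fin (p - 1) → Fin 2 → YGen p

/-- The inclusion `Fin (p-1) → Fin p`. -/
def finIncl {p : ℕ} (s : Fin (p - 1)) : Fin p := Fin.castLE (Nat.sub_le p 1) s

/-- The generators, as elements of the free algebra. -/
noncomputable def gE (p : ℕ) (s : Fin p) (σ : Bool) : FreeAlgebra ℂ (YGen p) :=
  ι ℂ (YGen.e s σ)

noncomputable def gAl (p : ℕ) (s : Fin (p - 1)) (i : Fin 2) : FreeAlgebra ℂ (YGen p) :=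
  ι ℂ (YGen.α s i)

noncomputable def gBe (p : ℕ) (s : Fin (p - 1)) (i : Fin 2) : FreeAlgebra ℂ (YGen p) :=
  ι ℂ (YGen.β s i)

/-- The defining relations of `Y_p`: the `e`'s are pairwise orthogonal idempotents whose sum
is `1`; `α_{s,i} = e_s⁺ α_{s,i} e_s⁻` and `β_{s,i} = e_s⁻ β_{s,i} e_s⁺` for all `s, i`; and
`α_{s,1}β_{s,2} + α_{s,2}β_{s,1} = 0`, `β_{s,1}α_{s,2} + β_{s,2}α_{s,1} = 0`. -/
inductive YRel (p : ℕ) : FreeAlgebra ℂ (YGen p) → FreeAlgebra ℂ (YGen p) → Prop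
  | orth (s t : Fin p) (σ τ : Bool) :
      YRel p (gE p s σ * gE p t τ) (if s = t ∧ σ = τ then gE p s σ else 0)
  | sum_eq_one : YRel p (∑ s : Fin p, (gE p s true + gE p s false)) 1
  | α_sandwich (s : Fin (p - 1)) (i : Fin 2) :
      YRel p (gAl p s i) (gE p (finIncl s) true * gAl p s i * gE p (finIncl s) false)
  | β_sandwich (s : Fin (p - 1)) (i : Fin 2) :
      YRel p (gBe p s i) (gE p (finIncl s) false * gBe p s i * gE p (finIncl s) true)
  | αβ (s : Fin (p - 1)) :
      YRel p (gAl p s 0 * gBe p s 1 + gAl p s 1 * gBe p s 0) 0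
  | βα (s : Fin (p - 1)) :
      YRel p (gBe p s 0 * gAl p s 1 + gBe p s 1 * gAl p s 0) 0

/-- The graded algebra `Y_p`, presented by the above generators and relations. -/
abbrev Yalg (p : ℕ) : Type := RingQuot (YRel p)

/-- The images of the generators in `Y_p`. -/
noncomputable def yE (p : ℕ) (s : Fin p) (σ : Bool) : Yalg p :=
  RingQuot.mkAlgHom ℂ (YRel p) (gE p s σ)

/-- The index set for the degree-one generators `α_{s,i}` (left) and `β_{s,i}` (right). -/
abbrev ArrIdx (p : ℕ) : Type := (Fin (p - 1) × Fin 2) ⊕ (Fin (p - 1) × Fin 2)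

/-- The degree-one generators of `Y_p`. -/
noncomputable def yArr (p : ℕ) : ArrIdx p → Yalg p
  | .inl (s, i) => RingQuot.mkAlgHom ℂ (YRel p) (gAl p s i)
  | .inr (s, i) => RingQuot.mkAlgHom ℂ (YRel p) (gBe p s i)

/-- The degree-`0` homogeneous component of `Y_p`: the `ℂ`-span of the idempotents `e_s^±`. -/
noncomputable def Ydeg0 (p : ℕ) : Submodule ℂ (Yalg p) :=
  Submodule.span ℂ (Set.range fun x : Fin p × Bool => yE p x.1 x.2)

/-- The degree-`n` homogeneous component of `Y_p` (for `n ≥ 1`): the `ℂ`-span of the products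
of exactly `n` of the degree-one generators. -/
noncomputable def Ydeg (p n : ℕ) : Submodule ℂ (Yalg p) :=
  Submodule.span ℂ
    {x : Yalg p | ∃ w : Fin n → ArrIdx p, x = (List.ofFn fun j => yArr p (w j)).prod}


/-! ### Auxiliary development -/

noncomputable section YAux

open Matrix MvPolynomial

abbrev Pz : Type := MvPolynomial (Fin 2) ℂ

abbrev MMod (p : ℕ) : Type := Matrix (Fin p × Bool) (Fin p × Bool) Pz

/-- Entry polynomials attached to the arrows. -/
def uPol (d : Bool) (i : Fin 2) : Pz :=
  if i = 0 then X 0 else if d then X 1 else -X 1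

def fGen (p : ℕ) : YGen p → MMod p
  | .e s σ => Matrix.single (s, σ) (s, σ) 1
  | .α s i => Matrix.single (finIncl s, true) (finIncl s, false) (uPol true i)
  | .β s i => Matrix.single (finIncl s, false) (finIncl s, true) (uPol false i)

def fFree (p : ℕ) : FreeAlgebra ℂ (YGen p) →ₐ[ℂ] MMod p := FreeAlgebra.lift ℂ (fGen p)

variable {p : ℕ}

lemma fFree_gE (s : Fin p) (σ : Bool) :
    fFree p (gE p s σ) = Matrix.single (s, σ) (s, σ) 1 := by
  simp [fFree, gE, fGen, FreeAlgebra.lift_ι_apply]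

lemma fFree_gAl (s : Fin (p-1)) (i : Fin 2) :
    fFree p (gAl p s i) = Matrix.single (finIncl s, true) (finIncl s, false) (uPol true i) := by
  simp [fFree, gAl, fGen, FreeAlgebra.lift_ι_apply]

lemma fFree_gBe (s : Fin (p-1)) (i : Fin 2) :
    fFree p (gBe p s i) = Matrix.single (finIncl s, false) (finIncl s, true) (uPol false i) := by
  simp [fFree, gBe, fGen, FreeAlgebra.lift_ι_apply]

lemma one_eq_sum_diag (p : ℕ) :
    (1 : MMod p) = ∑ x : Fin p × Bool, Matrix.single x x (1 : Pz) := by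
  ext a b
  rw [Matrix.sum_apply]
  simp only [Matrix.single, of_apply, Matrix.one_apply]
  by_cases hab : a = b
  · subst hab
    rw [if_pos rfl]
    rw [Finset.sum_eq_single a (fun x _ hx => if_neg (by rintro ⟨rfl, -⟩; exact hx rfl))
      (fun h => absurd (Finset.mem_univ a) h)]
    rw [if_pos ⟨rfl, rfl⟩]
  · rw [if_neg hab, Finset.sum_eq_zero fun x _ => if_neg (by rintro ⟨rfl, rfl⟩; exact hab rfl)]

lemma fRel {x y : FreeAlgebra ℂ (YGen p)} (h : YRel p x y) : fFree p x = fFree p y := by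
  induction h with
  | orth s t σ τ =>
    rw [_root_.map_mul, fFree_gE, fFree_gE]
    by_cases h1 : s = t ∧ σ = τ
    · obtain ⟨rfl, rfl⟩ := h1
      rw [if_pos ⟨rfl, rfl⟩, fFree_gE, Matrix.single_mul_single_same, one_mul]
    · rw [if_neg h1, map_zero, Matrix.single_mul_single_of_ne]
      intro hc
      apply h1
      exact ⟨congrArg Prod.fst hc, congrArg Prod.snd hc⟩
  | sum_eq_one =>
    rw [map_sum, _root_.map_one, one_eq_sum_diag, Fintype.sum_prod_type]
    refine Finset.sum_congr rfl fun s _ => ?_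
    rw [map_add, fFree_gE, fFree_gE, Fintype.sum_bool]
  | α_sandwich s i =>
    rw [_root_.map_mul, _root_.map_mul, fFree_gE, fFree_gE, fFree_gAl,
      Matrix.single_mul_single_same, Matrix.single_mul_single_same, one_mul, mul_one]
  | β_sandwich s i =>
    rw [_root_.map_mul, _root_.map_mul, fFree_gE, fFree_gE, fFree_gBe,
      Matrix.single_mul_single_same, Matrix.single_mul_single_same, one_mul, mul_one]
  | αβ s =>
    rw [map_zero, _root_.map_add, _root_.map_mul, _root_.map_mul, fFree_gAl, fFree_gAl, fFree_gBe, fFree_gBe,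
      Matrix.single_mul_single_same, Matrix.single_mul_single_same, ← Matrix.single_add]
    rw [show uPol true 0 * uPol false 1 + uPol true 1 * uPol false 0 = (0 : Pz) by
      simp only [uPol]; norm_num; ring]
    exact Matrix.single_zero _ _
  | βα s =>
    rw [map_zero, _root_.map_add, _root_.map_mul, _root_.map_mul, fFree_gAl, fFree_gAl, fFree_gBe, fFree_gBe,
      Matrix.single_mul_single_same, Matrix.single_mul_single_same, ← Matrix.single_add]
    rw [show uPol false 0 * uPol true 1 + uPol false 1 * uPol true 0 = (0 : Pz) by
      simp only [uPol]; norm_num; ring]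
    exact Matrix.single_zero _ _

/-- The representation of `Y_p` on the matrix model. -/
def phi (p : ℕ) : Yalg p →ₐ[ℂ] MMod p :=
  RingQuot.liftAlgHom ℂ ⟨fFree p, fun _ _ h => fRel h⟩

lemma phi_mk (x : FreeAlgebra ℂ (YGen p)) :
    phi p (RingQuot.mkAlgHom ℂ (YRel p) x) = fFree p x :=
  RingQuot.liftAlgHom_mkAlgHom_apply _ _ _ _

/-- The images of the arrows in `Y_p`. -/
def yA (p : ℕ) (s : Fin (p-1)) (i : Fin 2) : Yalg p := RingQuot.mkAlgHom ℂ (YRel p) (gAl p s i)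

def yB (p : ℕ) (s : Fin (p-1)) (i : Fin 2) : Yalg p := RingQuot.mkAlgHom ℂ (YRel p) (gBe p s i)

lemma yArr_inl (s : Fin (p-1)) (i : Fin 2) : yArr p (.inl (s, i)) = yA p s i := rfl

lemma yArr_inr (s : Fin (p-1)) (i : Fin 2) : yArr p (.inr (s, i)) = yB p s i := rfl

lemma phi_yE (s : Fin p) (σ : Bool) :
    phi p (yE p s σ) = Matrix.single (s, σ) (s, σ) 1 := by
  rw [yE, phi_mk, fFree_gE]

lemma phi_yA (s : Fin (p-1)) (i : Fin 2) :
    phi p (yA p s i) = Matrix.single (finIncl s, true) (finIncl s, false) (uPol true i) := by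
  rw [yA, phi_mk, fFree_gAl]

lemma phi_yB (s : Fin (p-1)) (i : Fin 2) :
    phi p (yB p s i) = Matrix.single (finIncl s, false) (finIncl s, true) (uPol false i) := by
  rw [yB, phi_mk, fFree_gBe]

/-! ### Relations in `Y_p` -/

lemma yE_mul_yE (s t : Fin p) (σ τ : Bool) :
    yE p s σ * yE p t τ = if s = t ∧ σ = τ then yE p s σ else 0 := by
  rw [yE, yE, ← _root_.map_mul, RingQuot.mkAlgHom_rel ℂ (YRel.orth s t σ τ)]
  split_ifs with h
  · rfl
  · exact map_zero _

lemma yE_mul_yE_ne {s t : Fin p} {σ τ : Bool} (h : ¬(s = t ∧ σ = τ)) :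
    yE p s σ * yE p t τ = 0 := by
  rw [yE_mul_yE, if_neg h]

lemma yA_sandwich (s : Fin (p-1)) (i : Fin 2) :
    yA p s i = yE p (finIncl s) true * yA p s i * yE p (finIncl s) false := by
  rw [yA, yE, yE, ← _root_.map_mul, ← _root_.map_mul]
  exact RingQuot.mkAlgHom_rel ℂ (YRel.α_sandwich s i)

lemma yB_sandwich (s : Fin (p-1)) (i : Fin 2) :
    yB p s i = yE p (finIncl s) false * yB p s i * yE p (finIncl s) true := by
  rw [yB, yE, yE, ← _root_.map_mul, ← _root_.map_mul]
  exact RingQuot.mkAlgHom_rel ℂ (YRel.β_sandwich s i)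

lemma yAB_rel (s : Fin (p-1)) :
    yA p s 0 * yB p s 1 + yA p s 1 * yB p s 0 = 0 := by
  rw [yA, yA, yB, yB, ← _root_.map_mul, ← _root_.map_mul, ← _root_.map_add,
    RingQuot.mkAlgHom_rel ℂ (YRel.αβ s), map_zero]

lemma yBA_rel (s : Fin (p-1)) :
    yB p s 0 * yA p s 1 + yB p s 1 * yA p s 0 = 0 := by
  rw [yB, yB, yA, yA, ← _root_.map_mul, ← _root_.map_mul, ← _root_.map_add,
    RingQuot.mkAlgHom_rel ℂ (YRel.βα s), map_zero]

lemma yA1_yB0 (s : Fin (p-1)) : yA p s 1 * yB p s 0 = -(yA p s 0 * yB p s 1) :=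
  eq_neg_of_add_eq_zero_left (by rw [add_comm]; exact yAB_rel s)

lemma yB1_yA0 (s : Fin (p-1)) : yB p s 1 * yA p s 0 = -(yB p s 0 * yA p s 1) :=
  eq_neg_of_add_eq_zero_left (by rw [add_comm]; exact yBA_rel s)

lemma sandwich_zero {R : Type*} [Ring R] {a b c d e f : R} (h : c * d = 0) :
    a * b * c * (d * e * f) = 0 := by
  rw [mul_assoc (a * b) c, ← mul_assoc c (d * e) f, ← mul_assoc c d e, h, zero_mul, zero_mul,
    mul_zero]

lemma finIncl_inj {s t : Fin (p-1)} (h : finIncl s = finIncl t) : s = t := by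
  unfold finIncl at h
  exact Fin.castLE_injective _ h

lemma yA_mul_yA (s t : Fin (p-1)) (i j : Fin 2) : yA p s i * yA p t j = 0 := by
  rw [yA_sandwich s i, yA_sandwich t j]
  exact sandwich_zero (yE_mul_yE_ne (by simp))

lemma yB_mul_yB (s t : Fin (p-1)) (i j : Fin 2) : yB p s i * yB p t j = 0 := by
  rw [yB_sandwich s i, yB_sandwich t j]
  exact sandwich_zero (yE_mul_yE_ne (by simp))

lemma yA_mul_yB_ne {s t : Fin (p-1)} (h : s ≠ t) (i j : Fin 2) : yA p s i * yB p t j = 0 := by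
  rw [yA_sandwich s i, yB_sandwich t j]
  exact sandwich_zero (yE_mul_yE_ne (by
    rintro ⟨h1, -⟩; exact h (finIncl_inj h1)))

lemma yB_mul_yA_ne {s t : Fin (p-1)} (h : s ≠ t) (i j : Fin 2) : yB p s i * yA p t j = 0 := by
  rw [yB_sandwich s i, yA_sandwich t j]
  exact sandwich_zero (yE_mul_yE_ne (by
    rintro ⟨h1, -⟩; exact h (finIncl_inj h1)))

/-! ### Words -/

/-- A single arrow, of type `α` if `d = true` and `β` otherwise. -/
def ltr (p : ℕ) (d : Bool) (s : Fin (p-1)) (i : Fin 2) : Yalg p :=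
  match d with
  | true => yA p s i
  | false => yB p s i

/-- The alternating word attached to a list of indices. -/
def word (p : ℕ) (s : Fin (p-1)) : Bool → List (Fin 2) → Yalg p
  | _, [] => 1
  | d, i :: l => ltr p d s i * word p s (!d) l

lemma word_nil (s : Fin (p-1)) (d : Bool) : word p s d [] = 1 := rfl

lemma word_cons (s : Fin (p-1)) (d : Bool) (i : Fin 2) (l : List (Fin 2)) :
    word p s d (i :: l) = ltr p d s i * word p s (!d) l := rfl

lemma swap_head (d : Bool) (s : Fin (p-1)) (T : Yalg p) :
    ltr p d s 1 * (ltr p (!d) s 0 * T) = -(ltr p d s 0 * (ltr p (!d) s 1 * T)) := by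
  cases d
  · show yB p s 1 * (yA p s 0 * T) = -(yB p s 0 * (yA p s 1 * T))
    have h := congrArg (· * T) (yBA_rel (p := p) s)
    simp only [add_mul, zero_mul, mul_assoc] at h
    exact eq_neg_of_add_eq_zero_left (by rwa [add_comm] at h)
  · show yA p s 1 * (yB p s 0 * T) = -(yA p s 0 * (yB p s 1 * T))
    have h := congrArg (· * T) (yAB_rel (p := p) s)
    simp only [add_mul, zero_mul, mul_assoc] at h
    exact eq_neg_of_add_eq_zero_left (by rwa [add_comm] at h)

lemma move_one (s : Fin (p-1)) :
    ∀ (a : ℕ) (l : List (Fin 2)) (d : Bool), ∃ c : ℂ,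
      word p s d (1 :: (List.replicate a 0 ++ l)) =
        c • word p s d (List.replicate a 0 ++ 1 :: l) := by
  intro a
  induction a with
  | zero => exact fun l d => ⟨1, by simp⟩
  | succ a ih =>
    intro l d
    obtain ⟨c, hc⟩ := ih l (!d)
    refine ⟨-c, ?_⟩
    have h1 : word p s d (1 :: (List.replicate (a+1) 0 ++ l)) =
        ltr p d s 1 * (ltr p (!d) s 0 * word p s d (List.replicate a 0 ++ l)) := by
      rw [List.replicate_succ, List.cons_append, word_cons, word_cons, Bool.not_not]
    have h2 : ltr p (!d) s 1 * word p s d (List.replicate a 0 ++ l) =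
        word p s (!d) (1 :: (List.replicate a 0 ++ l)) := by
      rw [word_cons, Bool.not_not]
    rw [h1, swap_head, h2, hc, mul_smul_comm, List.replicate_succ, List.cons_append,
      word_cons]
    exact (neg_smul c _).symm

lemma sort_word (s : Fin (p-1)) :
    ∀ (l : List (Fin 2)) (d : Bool), ∃ (a b : ℕ) (c : ℂ),
      a + b = l.length ∧
        word p s d l = c • word p s d (List.replicate a 0 ++ List.replicate b 1) := by
  intro l
  induction l with
  | nil => exact fun d => ⟨0, 0, 1, rfl, by simp [word_nil]⟩
  | cons i l ih =>
    intro d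
    obtain ⟨a, b, c, hab, hw⟩ := ih (!d)
    have hstep : word p s d (i :: l) =
        c • word p s d (i :: (List.replicate a 0 ++ List.replicate b 1)) := by
      rw [word_cons, hw, mul_smul_comm, word_cons]
    by_cases hi : i = 0
    · subst hi
      refine ⟨a + 1, b, c, by simp; omega, ?_⟩
      rw [hstep, List.replicate_succ, List.cons_append]
    · have hi1 : i = 1 := by omega
      subst hi1
      obtain ⟨c2, hc2⟩ := move_one s a (List.replicate b 1) d
      refine ⟨a, b + 1, c * c2, by simp; omega, ?_⟩
      rw [hstep, hc2, smul_smul, List.replicate_succ]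

/-- The canonical spanning family in degree `n`. -/
def canon (p n : ℕ) (i : Fin (p-1) × Bool × Fin (n+1)) : Yalg p :=
  word p i.1 i.2.1 (List.replicate (n - (i.2.2 : ℕ)) 0 ++ List.replicate (i.2.2 : ℕ) 1)

/-! ### Membership of words in `Ydeg` -/

def alist (p : ℕ) (s : Fin (p-1)) : Bool → List (Fin 2) → List (ArrIdx p)
  | _, [] => []
  | true, i :: l => Sum.inl (s, i) :: alist p s false l
  | false, i :: l => Sum.inr (s, i) :: alist p s true l

lemma alist_length (s : Fin (p-1)) :
    ∀ (l : List (Fin 2)) (d : Bool), (alist p s d l).length = l.length := by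
  intro l
  induction l with
  | nil => intro d; cases d <;> rfl
  | cons i l ih => intro d; cases d <;> simp [alist, ih]

lemma alist_prod (s : Fin (p-1)) :
    ∀ (l : List (Fin 2)) (d : Bool), ((alist p s d l).map (yArr p)).prod = word p s d l := by
  intro l
  induction l with
  | nil => intro d; cases d <;> rfl
  | cons i l ih =>
    intro d
    cases d
    · show ((Sum.inr (s, i) :: alist p s true l).map (yArr p)).prod = word p s false (i :: l)
      rw [List.map_cons, List.prod_cons, ih, word_cons]
      rfl
    · show ((Sum.inl (s, i) :: alist p s false l).map (yArr p)).prod = word p s true (i :: l)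
      rw [List.map_cons, List.prod_cons, ih, word_cons]
      rfl

lemma prod_mem_Ydeg (L : List (ArrIdx p)) : ((L.map (yArr p)).prod) ∈ Ydeg p L.length := by
  apply Submodule.subset_span
  refine ⟨fun j => L.get j, ?_⟩
  rw [show (List.ofFn fun j => yArr p (L.get j)) = L.map (yArr p) from by
    rw [show (fun j => yArr p (L.get j)) = yArr p ∘ L.get from rfl, ← List.map_ofFn,
      List.ofFn_get]]

lemma prod_mem_Ydeg' {n : ℕ} {L : List (ArrIdx p)} (h : L.length = n) :
    ((L.map (yArr p)).prod) ∈ Ydeg p n := h ▸ prod_mem_Ydeg L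

lemma canon_mem_Ydeg (n : ℕ) (i : Fin (p-1) × Bool × Fin (n+1)) :
    canon p n i ∈ Ydeg p n := by
  rw [canon, ← alist_prod]
  apply prod_mem_Ydeg'
  rw [alist_length]
  simp only [List.length_append, List.length_replicate]
  omega

/-! ### The spanning argument -/

lemma word_mem_span {n : ℕ} (s : Fin (p-1)) (d : Bool) (l : List (Fin 2)) (h : l.length = n) :
    word p s d l ∈ Submodule.span ℂ (Set.range (canon p n)) := by
  obtain ⟨a, b, c, hab, hw⟩ := sort_word s l d
  rw [hw]
  apply Submodule.smul_mem
  apply Submodule.subset_span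
  refine ⟨(s, d, ⟨b, by omega⟩), ?_⟩
  have ha : n - b = a := by omega
  simp only [canon, ha]

lemma mul_word_mem (x : ArrIdx p) (s : Fin (p-1)) (d : Bool) (a b : ℕ) :
    yArr p x * word p s d (List.replicate a 0 ++ List.replicate b 1) ∈
      Submodule.span ℂ (Set.range (canon p (a + b + 1))) := by
  have hlen : (List.replicate a (0 : Fin 2) ++ List.replicate b 1).length = a + b := by simp
  rcases x with ⟨t, i⟩ | ⟨t, i⟩
  · rw [yArr_inl]
    cases d with
    | true =>
      rcases hL : (List.replicate a (0 : Fin 2) ++ List.replicate b 1) with _ | ⟨j, r⟩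
      · have h0 : a + b = 0 := by rw [hL] at hlen; simpa using hlen.symm
        rw [word_nil, mul_one, show yA p t i = word p t true [i] from by
          simp [word_cons, word_nil, ltr]]
        exact word_mem_span t true [i] (by simp [h0])
      · rw [word_cons, show ltr p true s j = yA p s j from rfl, ← mul_assoc,
          yA_mul_yA, zero_mul]
        exact Submodule.zero_mem _
    | false =>
      by_cases hts : t = s
      · subst hts
        rw [show yA p t i * word p t false (List.replicate a 0 ++ List.replicate b 1) =
          word p t true (i :: (List.replicate a 0 ++ List.replicate b 1)) from rfl]
        exact word_mem_span t true _ (by simp)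
      · rcases hL : (List.replicate a (0 : Fin 2) ++ List.replicate b 1) with _ | ⟨j, r⟩
        · have h0 : a + b = 0 := by rw [hL] at hlen; simpa using hlen.symm
          rw [word_nil, mul_one, show yA p t i = word p t true [i] from by
            simp [word_cons, word_nil, ltr]]
          exact word_mem_span t true [i] (by simp [h0])
        · rw [word_cons, show ltr p false s j = yB p s j from rfl, ← mul_assoc,
            yA_mul_yB_ne hts, zero_mul]
          exact Submodule.zero_mem _
  · rw [yArr_inr]
    cases d with
    | false =>
      rcases hL : (List.replicate a (0 : Fin 2) ++ List.replicate b 1) with _ | ⟨j, r⟩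
      · have h0 : a + b = 0 := by rw [hL] at hlen; simpa using hlen.symm
        rw [word_nil, mul_one, show yB p t i = word p t false [i] from by
          simp [word_cons, word_nil, ltr]]
        exact word_mem_span t false [i] (by simp [h0])
      · rw [word_cons, show ltr p false s j = yB p s j from rfl, ← mul_assoc,
          yB_mul_yB, zero_mul]
        exact Submodule.zero_mem _
    | true =>
      by_cases hts : t = s
      · subst hts
        rw [show yB p t i * word p t true (List.replicate a 0 ++ List.replicate b 1) =
          word p t false (i :: (List.replicate a 0 ++ List.replicate b 1)) from rfl]
        exact word_mem_span t false _ (by simp)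
      · rcases hL : (List.replicate a (0 : Fin 2) ++ List.replicate b 1) with _ | ⟨j, r⟩
        · have h0 : a + b = 0 := by rw [hL] at hlen; simpa using hlen.symm
          rw [word_nil, mul_one, show yB p t i = word p t false [i] from by
            simp [word_cons, word_nil, ltr]]
          exact word_mem_span t false [i] (by simp [h0])
        · rw [word_cons, show ltr p true s j = yA p s j from rfl, ← mul_assoc,
            yB_mul_yA_ne hts, zero_mul]
          exact Submodule.zero_mem _

lemma prodL_mem_span (hp : 2 ≤ p) :
    ∀ L : List (ArrIdx p),
      ((L.map (yArr p)).prod) ∈ Submodule.span ℂ (Set.range (canon p L.length)) := by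
  intro L
  induction L with
  | nil =>
    rw [List.map_nil, List.prod_nil]
    have : (1 : Yalg p) = canon p 0 (⟨0, by omega⟩, true, 0) := rfl
    rw [this]
    exact Submodule.subset_span ⟨_, rfl⟩
  | cons x L ih =>
    rw [List.map_cons, List.prod_cons]
    have key : ∀ y ∈ Submodule.span ℂ (Set.range (canon p L.length)),
        yArr p x * y ∈ Submodule.span ℂ (Set.range (canon p (L.length + 1))) := by
      intro y hy
      induction hy using Submodule.span_induction with
      | mem y hy =>
        obtain ⟨⟨s, d, k⟩, rfl⟩ := hy
        have hk : (k : ℕ) ≤ L.length := by omega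
        have := mul_word_mem x s d (L.length - (k : ℕ)) (k : ℕ)
        rw [show L.length - (k : ℕ) + (k : ℕ) + 1 = L.length + 1 from by omega] at this
        exact this
      | zero => rw [mul_zero]; exact Submodule.zero_mem _
      | add u v _ _ hu hv => rw [mul_add]; exact Submodule.add_mem _ hu hv
      | smul c u _ hu => rw [mul_smul_comm]; exact Submodule.smul_mem _ _ hu
    have := key _ ih
    simpa using this

lemma Ydeg_eq (hp : 2 ≤ p) (n : ℕ) :
    Ydeg p n = Submodule.span ℂ (Set.range (canon p n)) := by
  apply le_antisymm
  · rw [Ydeg, Submodule.span_le]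
    rintro x ⟨w, rfl⟩
    have h1 : (List.ofFn fun j => yArr p (w j)) = (List.ofFn w).map (yArr p) := by
      rw [List.map_ofFn]; rfl
    rw [h1]
    have := prodL_mem_span hp (List.ofFn w)
    rwa [List.length_ofFn] at this
  · rw [Submodule.span_le]
    rintro x ⟨i, rfl⟩
    exact canon_mem_Ydeg n i

/-! ### Computation of `phi` on words -/

lemma phi_ltr (d : Bool) (s : Fin (p-1)) (i : Fin 2) :
    phi p (ltr p d s i) = Matrix.single (finIncl s, d) (finIncl s, !d) (uPol d i) := by
  cases d <;> simp [ltr, phi_yA, phi_yB]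

def flipb (d : Bool) (m : ℕ) : Bool := if Even m then d else !d

lemma flipb_not (d : Bool) (m : ℕ) : flipb (!d) m = flipb d (m + 1) := by
  by_cases h : Even m <;> simp [flipb, h, Nat.even_add_one, Bool.not_not]

lemma uPol_zero (d : Bool) : uPol d 0 = X 0 := by simp [uPol]

lemma uPol_one (d : Bool) : uPol d 1 = if d then X 1 else -X 1 := by
  simp [uPol]

def sgn (d : Bool) : ℂ := if d then 1 else -1

lemma sgn_one_or (d : Bool) : sgn d = 1 ∨ sgn d = -1 := by cases d <;> simp [sgn]

lemma uPol_one_eq (d : Bool) : uPol d 1 = sgn d • X 1 := by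
  cases d <;> simp [uPol, sgn, neg_one_smul]

lemma phi_word_single (s : Fin (p-1)) (d : Bool) (i : Fin 2) :
    phi p (word p s d [i]) = Matrix.single (finIncl s, d) (finIncl s, !d) (uPol d i) := by
  rw [word_cons, _root_.map_mul, phi_ltr, word_nil, _root_.map_one, mul_one]

lemma phi_word_step (s : Fin (p-1)) (d e : Bool) (q : Pz) (ε : ℂ) (i : Fin 2) (l : List (Fin 2))
    (h : phi p (word p s (!d) l) = ε • Matrix.single (finIncl s, !d) (finIncl s, e) q) :
    phi p (word p s d (i :: l)) =
      ε • Matrix.single (finIncl s, d) (finIncl s, e) (uPol d i * q) := by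
  rw [word_cons, _root_.map_mul, phi_ltr, h, mul_smul_comm, Matrix.single_mul_single_same]

lemma phi_word (s : Fin (p-1)) :
    ∀ (a b : ℕ) (d : Bool), 1 ≤ a + b → ∃ ε : ℂ, (ε = 1 ∨ ε = -1) ∧
      phi p (word p s d (List.replicate a 0 ++ List.replicate b 1)) =
        ε • Matrix.single (finIncl s, d) (finIncl s, flipb d (a + b))
          (X 0 ^ a * X 1 ^ b) := by
  intro a
  induction a with
  | zero =>
    intro b
    induction b with
    | zero => intro d h; omega
    | succ b ihb =>
      intro d _
      rcases Nat.eq_zero_or_pos b with hb | hb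
      · subst hb
        refine ⟨sgn d, sgn_one_or d, ?_⟩
        rw [show (List.replicate 0 (0 : Fin 2) ++ List.replicate 1 1) = [(1 : Fin 2)] from rfl,
          phi_word_single, show flipb d (0 + 1) = !d from if_neg (by decide), uPol_one_eq,
          ← Matrix.smul_single, show (X 0 ^ 0 * X 1 ^ 1 : Pz) = X 1 from by ring]
      · obtain ⟨ε, hε, hstep⟩ := ihb (!d) (by omega)
        refine ⟨ε * sgn d, by rcases hε with h | h <;> cases d <;> simp [h, sgn], ?_⟩
        rw [show (List.replicate 0 (0 : Fin 2) ++ List.replicate (b+1) 1)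
            = 1 :: (List.replicate 0 0 ++ List.replicate b 1) from rfl]
        rw [phi_word_step s d _ _ ε 1 _ hstep]
        rw [show flipb (!d) (0 + b) = flipb d (0 + (b+1)) from flipb_not d (0 + b)]
        rw [uPol_one_eq, smul_mul_assoc,
          show X 1 * (X 0 ^ 0 * X 1 ^ b) = (X 0 ^ 0 * X 1 ^ (b+1) : Pz) from by ring,
          ← Matrix.smul_single, smul_smul]
  | succ a iha =>
    intro b d _
    rcases Nat.eq_zero_or_pos (a + b) with hab | hab
    · have ha : a = 0 := by omega
      have hb : b = 0 := by omega
      subst ha; subst hb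
      refine ⟨1, Or.inl rfl, ?_⟩
      rw [show (List.replicate 1 (0 : Fin 2) ++ List.replicate 0 1) = [(0 : Fin 2)] from rfl,
        phi_word_single, show flipb d (0 + 1 + 0) = !d from if_neg (by decide), uPol_zero,
        one_smul, show (X 0 ^ 1 * X 1 ^ 0 : Pz) = X 0 from by ring]
    · obtain ⟨ε, hε, hstep⟩ := iha b (!d) (by omega)
      refine ⟨ε, hε, ?_⟩
      rw [show (List.replicate (a+1) (0 : Fin 2) ++ List.replicate b 1)
          = 0 :: (List.replicate a 0 ++ List.replicate b 1) from rfl]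
      rw [phi_word_step s d _ _ ε 0 _ hstep]
      rw [show flipb (!d) (a + b) = flipb d (a + 1 + b) from by
        rw [flipb_not]; congr 1; omega]
      rw [uPol_zero, show X 0 * (X 0 ^ a * X 1 ^ b) = (X 0 ^ (a+1) * X 1 ^ b : Pz) from by ring]

lemma phi_canon {n : ℕ} (hn : 1 ≤ n) (i : Fin (p-1) × Bool × Fin (n+1)) :
    ∃ ε : ℂ, (ε = 1 ∨ ε = -1) ∧
      phi p (canon p n i) = ε • Matrix.single (finIncl i.1, i.2.1)
        (finIncl i.1, flipb i.2.1 n) (X 0 ^ (n - (i.2.2 : ℕ)) * X 1 ^ (i.2.2 : ℕ)) := by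
  obtain ⟨s, d, k⟩ := i
  have hk : (k : ℕ) ≤ n := by omega
  obtain ⟨ε, hε, hw⟩ := phi_word s (n - (k : ℕ)) (k : ℕ) d (by omega)
  rw [show n - (k : ℕ) + (k : ℕ) = n from by omega] at hw
  exact ⟨ε, hε, hw⟩

lemma std_entry (i j a b : Fin p × Bool) (q : Pz) :
    Matrix.single i j q a b = if i = a ∧ j = b then q else 0 := rfl

lemma coeff_XX {u v u' v' : ℕ} :
    MvPolynomial.coeff (Finsupp.single 0 u' + Finsupp.single 1 v')
      ((X 0 ^ u * X 1 ^ v : Pz)) = if u = u' ∧ v = v' then 1 else 0 := by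
  rw [X_pow_eq_monomial, X_pow_eq_monomial, monomial_mul, one_mul, coeff_monomial]
  by_cases h : u = u' ∧ v = v'
  · obtain ⟨rfl, rfl⟩ := h
    rw [if_pos rfl, if_pos ⟨rfl, rfl⟩]
  · rw [if_neg h, if_neg ?_]
    intro hc
    apply h
    have h0 := DFunLike.congr_fun hc (0 : Fin 2)
    have h1 := DFunLike.congr_fun hc (1 : Fin 2)
    simp [Finsupp.single_apply] at h0 h1
    exact ⟨h0, h1⟩

def Lmap (p : ℕ) (r c : Fin p × Bool) (m : Fin 2 →₀ ℕ) : MMod p →ₗ[ℂ] ℂ where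
  toFun M := MvPolynomial.coeff m (M r c)
  map_add' := by intros; simp [Matrix.add_apply, MvPolynomial.coeff_add]
  map_smul' := by intros; simp [Matrix.smul_apply, MvPolynomial.coeff_smul]

lemma canon_li {n : ℕ} (hn : 1 ≤ n) : LinearIndependent ℂ (canon p n) := by
  apply LinearIndependent.of_comp (phi p).toLinearMap
  rw [Fintype.linearIndependent_iff]
  intro g hg i₀
  choose ε hε hphi using fun i => phi_canon (p := p) hn i
  obtain ⟨s₀, d₀, k₀⟩ := i₀
  have hsum : ∑ i : Fin (p-1) × Bool × Fin (n+1),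
      g i * (ε i * MvPolynomial.coeff (Finsupp.single 0 (n - (k₀ : ℕ)) + Finsupp.single 1 (k₀ : ℕ))
        ((Matrix.single (finIncl i.1, i.2.1) (finIncl i.1, flipb i.2.1 n)
          ((X 0 : Pz) ^ (n - (i.2.2 : ℕ)) * X 1 ^ (i.2.2 : ℕ)))
            (finIncl s₀, d₀) (finIncl s₀, flipb d₀ n))) = 0 := by
    have h1 := congrArg (Lmap p (finIncl s₀, d₀) (finIncl s₀, flipb d₀ n)
      (Finsupp.single 0 (n - (k₀ : ℕ)) + Finsupp.single 1 (k₀ : ℕ))) hg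
    rw [map_zero, map_sum] at h1
    rw [Finset.sum_congr rfl fun i _ => ?_] at h1
    · exact h1
    · rw [_root_.map_smul, Function.comp_apply, smul_eq_mul]
      congr 1
      show Lmap p _ _ _ (phi p (canon p n i)) = _
      rw [hphi i, _root_.map_smul, smul_eq_mul]
      rfl
  rw [Finset.sum_eq_single ((s₀, d₀, k₀) : Fin (p-1) × Bool × Fin (n+1))] at hsum
  · rw [Matrix.single_apply_same, coeff_XX, if_pos ⟨rfl, rfl⟩, mul_one] at hsum
    rcases hε (s₀, d₀, k₀) with h | h <;> rw [h] at hsum <;> simpa using hsum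
  · rintro ⟨s, d, k⟩ - hne
    by_cases hsd : s = s₀ ∧ d = d₀
    · obtain ⟨rfl, rfl⟩ := hsd
      rw [Matrix.single_apply_same, coeff_XX, if_neg, mul_zero, mul_zero]
      rintro ⟨-, hk⟩
      have hk' : k = k₀ := by apply Fin.val_injective; exact hk
      exact hne (by rw [hk'])
    · rw [std_entry, if_neg, MvPolynomial.coeff_zero, mul_zero, mul_zero]
      rintro ⟨h1, -⟩
      exact hsd ⟨finIncl_inj (congrArg Prod.fst h1), congrArg Prod.snd h1⟩
  · intro h
    exact absurd (Finset.mem_univ _) h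

lemma yE_li : LinearIndependent ℂ (fun x : Fin p × Bool => yE p x.1 x.2) := by
  apply LinearIndependent.of_comp (phi p).toLinearMap
  rw [Fintype.linearIndependent_iff]
  intro g hg x₀
  have hsum : ∑ x : Fin p × Bool,
      g x * MvPolynomial.coeff (0 : Fin 2 →₀ ℕ) ((Matrix.single x x (1 : Pz)) x₀ x₀) = 0 := by
    have h1 := congrArg (Lmap p x₀ x₀ (0 : Fin 2 →₀ ℕ)) hg
    rw [map_zero, map_sum] at h1
    rw [Finset.sum_congr rfl fun x _ => ?_] at h1
    · exact h1
    · rw [_root_.map_smul, Function.comp_apply, smul_eq_mul]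
      congr 1
      show Lmap p _ _ _ (phi p (yE p x.1 x.2)) = _
      rw [phi_yE]
      rfl
  rw [Finset.sum_eq_single x₀] at hsum
  · rw [Matrix.single_apply_same] at hsum
    simpa using hsum
  · intro x _ hx
    rw [std_entry, if_neg, MvPolynomial.coeff_zero, mul_zero]
    rintro ⟨rfl, -⟩
    exact hx rfl
  · intro h
    exact absurd (Finset.mem_univ _) h

end YAux

/-- in the graded algebra `Y_p`, the homogeneous component of degree `0` has
`ℂ`-dimension `2p`, and for every `n ≥ 1` the homogeneous component of degree `n` has
`ℂ`-dimension `2(n+1)(p−1)`. -/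
theorem stmt_14 (p : ℕ) (hp : 2 ≤ p) :
    Module.finrank ℂ ↥(Ydeg0 p) = 2 * p ∧
    ∀ n : ℕ, 1 ≤ n → Module.finrank ℂ ↥(Ydeg p n) = 2 * (n + 1) * (p - 1) := by
  constructor
  · rw [Ydeg0, finrank_span_eq_card yE_li]
    simp only [Fintype.card_prod, Fintype.card_fin, Fintype.card_bool]
    omega
  · intro n hn
    rw [Ydeg_eq hp n, finrank_span_eq_card (canon_li hn)]
    simp only [Fintype.card_prod, Fintype.card_fin, Fintype.card_bool]
    generalize p - 1 = q
    ring
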